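/- If the MH Markov chain $(X_n)$ is Harris recurrent w.r.t. $\phi$, then the augmented chain $(X_n, Y_n)$ (state together with next proposal) is Harris recurrent w.r.t. the measure $\phi_P(dx\,dy) = P(x,dy)\phi(dx)$: for every set $A$ with $\phi_P(A)>0$ and every starting point, almost surely $(X_n,Y_n) \in A$ for infinitely many $n$. -/

import Mathlib

open MeasureTheory ProbabilityTheory ENNReal Filter

/-- The process `W` is a time-homogeneous Markov chain with transition kernel `κ`
under `Pr`: the conditional expectation of `1_A (W (n+1))` given the natural
σ-algebra generated by `W 0, …, W n` is `(κ (W n) A).toReal`. -/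
def IsMarkovChain {S Ω : Type*} [MeasurableSpace S] [mΩ : MeasurableSpace Ω]
    (Pr : Measure Ω) (κ : Kernel S S) (W : ℕ → Ω → S) : Prop :=
  (∀ n, Measurable (W n)) ∧
  ∀ (n : ℕ) (A : Set S), MeasurableSet A →
    (Pr[fun ω => Set.indicator A (fun _ => (1 : ℝ)) (W (n + 1) ω) |
        ⨆ i ∈ Finset.range (n + 1), MeasurableSpace.comap (W i) inferInstance])
      =ᵐ[Pr] fun ω => (κ (W n ω) A).toReal

/-- A kernel `κ` is Harris recurrent w.r.t. a measure `φ`: for every Markov chain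
with transition kernel `κ` (any initial distribution) and every set of positive
`φ`-measure, the set is visited infinitely often almost surely. -/
def HarrisRecurrent {S : Type*} [MeasurableSpace S] (κ : Kernel S S) (φ : Measure S) : Prop :=
  ∀ (Ω : Type) (mΩ : MeasurableSpace Ω) (Pr : Measure Ω), IsProbabilityMeasure Pr →
    ∀ W : ℕ → Ω → S, IsMarkovChain Pr κ W →
      ∀ A : Set S, MeasurableSet A → 0 < φ A →
        ∀ᵐ ω ∂Pr, {n | W n ω ∈ A}.Infinite

namespace MCAux

variable {S Ω : Type*} [MeasurableSpace S] {mΩ : MeasurableSpace Ω}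

/-- natural filtration of `W` -/
def natF (W : ℕ → Ω → S) (n : ℕ) : MeasurableSpace Ω :=
  ⨆ i ∈ Finset.range (n + 1), MeasurableSpace.comap (W i) inferInstance

lemma comap_le_natF {W : ℕ → Ω → S} {i n : ℕ} (h : i ≤ n) :
    MeasurableSpace.comap (W i) inferInstance ≤ natF W n :=
  le_iSup₂ (f := fun i (_ : i ∈ Finset.range (n + 1)) =>
    MeasurableSpace.comap (W i) inferInstance) i (Finset.mem_range.2 (Nat.lt_succ_of_le h))

lemma natF_le {W : ℕ → Ω → S} (hW : ∀ n, Measurable (W n)) (n : ℕ) :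
    natF W n ≤ mΩ :=
  iSup₂_le fun i _ => (hW i).comap_le

lemma natF_mono {W : ℕ → Ω → S} : Monotone (natF W) := by
  intro a b hab
  exact iSup₂_le fun i hi => comap_le_natF (le_trans (Nat.lt_succ_iff.1 (Finset.mem_range.1 hi)) hab)

lemma measurableSet_preimage_natF {W : ℕ → Ω → S} {i n : ℕ} (h : i ≤ n) {E : Set S}
    (hE : MeasurableSet E) : MeasurableSet[natF W n] (W i ⁻¹' E) :=
  comap_le_natF h _ ⟨E, hE, rfl⟩

variable {Pr : Measure Ω} [IsProbabilityMeasure Pr] {κ : Kernel S S} [IsMarkovKernel κ]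
  {W : ℕ → Ω → S}

lemma indicator_comp (E : Set S) (f : Ω → S) :
    (fun ω => Set.indicator E (fun _ => (1 : ℝ)) (f ω)) =
      (f ⁻¹' E).indicator (fun _ => (1 : ℝ)) := rfl

lemma markov_measure_eq (hW : IsMarkovChain Pr κ W) (n : ℕ) {C : Set Ω}
    (hC : MeasurableSet[natF W n] C) {E : Set S} (hE : MeasurableSet E) :
    Pr (W (n + 1) ⁻¹' E ∩ C) = ∫⁻ ω in C, κ (W n ω) E ∂Pr := by
  have hle := natF_le (mΩ := mΩ) hW.1 n
  have hCm : MeasurableSet C := hle C hC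
  haveI : SigmaFinite (Pr.trim hle) := inferInstance
  have hcx := (hW.2 n E hE)
  have hint : Integrable (fun ω => Set.indicator E (fun _ => (1 : ℝ)) (W (n + 1) ω)) Pr := by
    refine Integrable.mono' (integrable_const 1)
      (((measurable_const.indicator hE).comp (hW.1 (n + 1))).aestronglyMeasurable)
      (Filter.Eventually.of_forall fun ω => ?_)
    by_cases h : W (n + 1) ω ∈ E <;> simp [Set.indicator_apply, h]
  have h1 : ∫ ω in C, Set.indicator E (fun _ => (1 : ℝ)) (W (n + 1) ω) ∂Pr
      = ∫ ω in C, (κ (W n ω) E).toReal ∂Pr := by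
    rw [← setIntegral_condExp hle hint hC]
    exact setIntegral_congr_ae hCm (hcx.mono fun ω h _ => h)
  have hlhs : ∫ ω in C, Set.indicator E (fun _ => (1 : ℝ)) (W (n + 1) ω) ∂Pr
      = (Pr (W (n + 1) ⁻¹' E ∩ C)).toReal := by
    rw [indicator_comp, ← Pi.one_def, integral_indicator_one ((hW.1 (n + 1)) hE),
      measureReal_restrict_apply ((hW.1 (n + 1)) hE), Measure.real]
  have hfin : ∫⁻ ω in C, κ (W n ω) E ∂Pr ≠ ∞ := by
    refine ne_top_of_le_ne_top (measure_ne_top Pr C) ?_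
    calc ∫⁻ ω in C, κ (W n ω) E ∂Pr ≤ ∫⁻ _ in C, 1 ∂Pr :=
          lintegral_mono fun ω => prob_le_one
      _ = Pr C := by simp
  have hrhs : ∫ ω in C, (κ (W n ω) E).toReal ∂Pr
      = (∫⁻ ω in C, κ (W n ω) E ∂Pr).toReal := by
    refine integral_toReal (((κ.measurable_coe hE).comp (hW.1 n)).aemeasurable) ?_
    exact Filter.Eventually.of_forall fun ω => lt_of_le_of_lt prob_le_one one_lt_top
  have key : (Pr (W (n + 1) ⁻¹' E ∩ C)).toReal
      = (∫⁻ ω in C, κ (W n ω) E ∂Pr).toReal := by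
    rw [← hlhs, h1, hrhs]
  exact (ENNReal.toReal_eq_toReal_iff' (measure_ne_top Pr _) hfin).1 key

lemma markov_map_restrict (hW : IsMarkovChain Pr κ W) (n : ℕ) {C : Set Ω}
    (hC : MeasurableSet[natF W n] C) :
    Measure.map (W (n + 1)) (Pr.restrict C)
      = (Pr.restrict C).bind (fun ω => κ (W n ω)) := by
  have hle := natF_le (mΩ := mΩ) hW.1 n
  have hCm : MeasurableSet C := hle C hC
  ext E hE
  rw [Measure.map_apply (hW.1 (n + 1)) hE,
    Measure.bind_apply hE (show Measurable fun ω => κ (W n ω) from κ.measurable.comp (hW.1 n)).aemeasurable,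
    Measure.restrict_apply ((hW.1 (n + 1)) hE)]
  exact markov_measure_eq hW n hC hE

lemma markov_setLIntegral (hW : IsMarkovChain Pr κ W) (n : ℕ) {C : Set Ω}
    (hC : MeasurableSet[natF W n] C) {f : S → ℝ≥0∞} (hf : Measurable f) :
    ∫⁻ ω in C, f (W (n + 1) ω) ∂Pr = ∫⁻ ω in C, ∫⁻ z, f z ∂(κ (W n ω)) ∂Pr := by
  calc ∫⁻ ω in C, f (W (n + 1) ω) ∂Pr
      = ∫⁻ z, f z ∂(Measure.map (W (n + 1)) (Pr.restrict C)) :=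
        (lintegral_map hf (hW.1 (n + 1))).symm
    _ = ∫⁻ z, f z ∂((Pr.restrict C).bind (fun ω => κ (W n ω))) := by
        rw [markov_map_restrict hW n hC]
    _ = ∫⁻ ω in C, ∫⁻ z, f z ∂(κ (W n ω)) ∂Pr :=
        Measure.lintegral_bind (show Measurable fun ω => κ (W n ω) from κ.measurable.comp (hW.1 n)).aemeasurable hf.aemeasurable


lemma dirac_prod_apply {β : Type*} [MeasurableSpace β] {ν : Measure β} [SFinite ν]
    (u : S) {T : Set (S × β)} (hT : MeasurableSet T) :
    ((Measure.dirac u).prod ν) T = ν (Prod.mk u ⁻¹' T) := by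
  rw [Measure.prod_apply hT]
  exact lintegral_dirac' u (measurable_measure_prodMk_left hT)

lemma lintegral_dirac_prod {β : Type*} [MeasurableSpace β] {ν : Measure β} [SFinite ν]
    (u : S) {f : S × β → ℝ≥0∞} (hf : Measurable f) :
    ∫⁻ z, f z ∂((Measure.dirac u).prod ν) = ∫⁻ v, f (u, v) ∂ν := by
  rw [lintegral_prod _ hf.aemeasurable]
  exact lintegral_dirac' u hf.lintegral_prod_right'

lemma lintegral_inter_indicator {μ : Measure Ω} {F T : Set Ω} (hT : MeasurableSet T)
    (h : Ω → ℝ≥0∞) :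
    ∫⁻ ω in F ∩ T, h ω ∂μ = ∫⁻ ω in F, T.indicator h ω ∂μ := by
  rw [lintegral_indicator hT, Measure.restrict_restrict hT, Set.inter_comm]

def supComapFst {G : Type*} [MeasurableSpace G] (W : ℕ → Ω → G × G) (n : ℕ) :
    MeasurableSpace Ω :=
  natF W n ⊔ MeasurableSpace.comap (fun ω => (W (n + 1) ω).1) inferInstance

end MCAux

open MCAux in
lemma Vchain {G Ω : Type*} [MeasurableSpace G] {mΩ : MeasurableSpace Ω}
    (Pr : Measure Ω) [IsProbabilityMeasure Pr]
    (P : Kernel G G) [IsMarkovKernel P]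
    (K : Kernel G G) [IsMarkovKernel K]
    (Kaug : Kernel (G × G) (G × G)) [IsMarkovKernel Kaug]
    (α : G → G → ℝ)
    (hKaug : ∀ x y, Kaug (x, y) =
      ENNReal.ofReal (α x y) • ((Measure.dirac y).prod (P y)) +
      ENNReal.ofReal (1 - α x y) • ((Measure.dirac x).prod (P x)))
    (hmarg : ∀ (B' : Set G), MeasurableSet B' → ∀ u,
      ∫⁻ v, Kaug (u, v) (B' ×ˢ (Set.univ : Set G)) ∂(P u) = K u B')
    (W : ℕ → Ω → G × G) (hW : IsMarkovChain Pr Kaug W) :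
    IsMarkovChain Pr K (fun n ω => (W (n + 1) ω).1) := by
  haveI : ∀ w : G × G, IsProbabilityMeasure (Kaug w) := fun w => inferInstance
  have hWm := hW.1
  refine ⟨fun n => measurable_fst.comp (hWm (n + 1)), ?_⟩
  intro n B' hB'
  -- the key set-integral identity on generators
  have key : ∀ (F : Set Ω), MeasurableSet[natF W n] F → ∀ (D : Set G), MeasurableSet D →
      ∫⁻ ω in F ∩ (fun ω => (W (n + 1) ω).1) ⁻¹' D,
        (B' ×ˢ (Set.univ : Set G)).indicator (fun _ => (1 : ℝ≥0∞)) (W (n + 2) ω) ∂Pr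
      = ∫⁻ ω in F ∩ (fun ω => (W (n + 1) ω).1) ⁻¹' D, K (W (n + 1) ω).1 B' ∂Pr := by
    intro F hF D hD
    have hpre : (fun ω => (W (n + 1) ω).1) ⁻¹' D = W (n + 1) ⁻¹' (D ×ˢ Set.univ) := by
      ext ω; simp
    have hTmeas : MeasurableSet (W (n + 1) ⁻¹' (D ×ˢ (Set.univ : Set G))) :=
      hWm (n + 1) (hD.prod MeasurableSet.univ)
    have hC0 : MeasurableSet[natF W (n + 1)]
        (F ∩ (fun ω => (W (n + 1) ω).1) ⁻¹' D) := by
      refine MeasurableSet.inter (natF_mono (Nat.le_succ n) F hF) ?_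
      rw [hpre]
      exact measurableSet_preimage_natF le_rfl (hD.prod MeasurableSet.univ)
    have hf1 : Measurable ((D ×ˢ (Set.univ : Set G)).indicator
        (fun z => Kaug z (B' ×ˢ (Set.univ : Set G)))) :=
      (Kaug.measurable_coe (hB'.prod MeasurableSet.univ)).indicator
        (hD.prod MeasurableSet.univ)
    have hf2 : Measurable ((D ×ˢ (Set.univ : Set G)).indicator
        (fun z => K z.1 B')) :=
      ((K.measurable_coe hB').comp measurable_fst).indicator (hD.prod MeasurableSet.univ)
    -- pointwise identity for the inner integrals
    have hptw : ∀ w : G × G,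
        ∫⁻ z, (D ×ˢ (Set.univ : Set G)).indicator
          (fun z => Kaug z (B' ×ˢ (Set.univ : Set G))) z ∂(Kaug w)
        = ∫⁻ z, (D ×ˢ (Set.univ : Set G)).indicator (fun z => K z.1 B') z ∂(Kaug w) := by
      rintro ⟨x, y⟩
      have huu : ∀ u : G,
          ∫⁻ z, (D ×ˢ (Set.univ : Set G)).indicator
            (fun z => Kaug z (B' ×ˢ (Set.univ : Set G))) z ∂((Measure.dirac u).prod (P u))
          = ∫⁻ z, (D ×ˢ (Set.univ : Set G)).indicator
            (fun z => K z.1 B') z ∂((Measure.dirac u).prod (P u)) := by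
        intro u
        rw [lintegral_dirac_prod u hf1, lintegral_dirac_prod u hf2]
        by_cases hu : u ∈ D
        · have h1 : ∀ v, (D ×ˢ (Set.univ : Set G)).indicator
              (fun z => Kaug z (B' ×ˢ (Set.univ : Set G))) (u, v)
              = Kaug (u, v) (B' ×ˢ (Set.univ : Set G)) := fun v =>
            Set.indicator_of_mem (by simp [hu]) _
          have h2 : ∀ v, (D ×ˢ (Set.univ : Set G)).indicator
              (fun z => K z.1 B') (u, v) = K u B' := fun v =>
            Set.indicator_of_mem (by simp [hu]) _
          rw [lintegral_congr h1, lintegral_congr h2, hmarg B' hB' u, lintegral_const,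
            measure_univ, mul_one]
        · have h1 : ∀ v, (D ×ˢ (Set.univ : Set G)).indicator
              (fun z => Kaug z (B' ×ˢ (Set.univ : Set G))) (u, v) = 0 := fun v =>
            Set.indicator_of_notMem (by simp [hu]) _
          have h2 : ∀ v, (D ×ˢ (Set.univ : Set G)).indicator
              (fun z => K z.1 B') (u, v) = 0 := fun v =>
            Set.indicator_of_notMem (by simp [hu]) _
          rw [lintegral_congr h1, lintegral_congr h2]
      rw [hKaug x y, lintegral_add_measure, lintegral_add_measure,
        lintegral_smul_measure, lintegral_smul_measure, lintegral_smul_measure,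
        lintegral_smul_measure, huu x, huu y]
    calc ∫⁻ ω in F ∩ (fun ω => (W (n + 1) ω).1) ⁻¹' D,
          (B' ×ˢ (Set.univ : Set G)).indicator (fun _ => (1 : ℝ≥0∞)) (W (n + 2) ω) ∂Pr
        = ∫⁻ ω in F ∩ (fun ω => (W (n + 1) ω).1) ⁻¹' D,
            Kaug (W (n + 1) ω) (B' ×ˢ (Set.univ : Set G)) ∂Pr := by
          rw [markov_setLIntegral hW (n + 1) hC0
            (measurable_const.indicator (hB'.prod MeasurableSet.univ))]
          exact lintegral_congr fun ω =>
            lintegral_indicator_one (hB'.prod MeasurableSet.univ)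
      _ = ∫⁻ ω in F, (D ×ˢ (Set.univ : Set G)).indicator
            (fun z => Kaug z (B' ×ˢ (Set.univ : Set G))) (W (n + 1) ω) ∂Pr := by
          rw [hpre, lintegral_inter_indicator hTmeas]
          exact lintegral_congr fun ω => by
            by_cases h : (W (n + 1) ω) ∈ D ×ˢ (Set.univ : Set G) <;>
              simp [Set.indicator_apply, h, Set.mem_preimage]
      _ = ∫⁻ ω in F, ∫⁻ z, (D ×ˢ (Set.univ : Set G)).indicator
            (fun z => Kaug z (B' ×ˢ (Set.univ : Set G))) z ∂(Kaug (W n ω)) ∂Pr :=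
          markov_setLIntegral hW n hF hf1
      _ = ∫⁻ ω in F, ∫⁻ z, (D ×ˢ (Set.univ : Set G)).indicator
            (fun z => K z.1 B') z ∂(Kaug (W n ω)) ∂Pr :=
          lintegral_congr fun ω => hptw (W n ω)
      _ = ∫⁻ ω in F, (D ×ˢ (Set.univ : Set G)).indicator
            (fun z => K z.1 B') (W (n + 1) ω) ∂Pr :=
          (markov_setLIntegral hW n hF hf2).symm
      _ = ∫⁻ ω in F ∩ (fun ω => (W (n + 1) ω).1) ⁻¹' D, K (W (n + 1) ω).1 B' ∂Pr := by
          rw [hpre, lintegral_inter_indicator hTmeas]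
          exact lintegral_congr fun ω => by
            by_cases h : (W (n + 1) ω) ∈ D ×ˢ (Set.univ : Set G) <;>
              simp [Set.indicator_apply, h, Set.mem_preimage]
  -- the σ-algebra supComapFst W n
  have hHle : supComapFst W n ≤ mΩ :=
    sup_le (natF_le hWm n) (measurable_fst.comp (hWm (n + 1))).comap_le
  -- densities
  set q₁ : Ω → ℝ≥0∞ :=
    fun ω => (B' ×ˢ (Set.univ : Set G)).indicator (fun _ => (1 : ℝ≥0∞)) (W (n + 2) ω)
    with hq₁def
  set q₂ : Ω → ℝ≥0∞ := fun ω => K (W (n + 1) ω).1 B' with hq₂def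
  have hq₁m : Measurable q₁ :=
    (measurable_const.indicator (hB'.prod MeasurableSet.univ)).comp (hWm (n + 2))
  have hq₂m : Measurable q₂ :=
    (K.measurable_coe hB').comp (measurable_fst.comp (hWm (n + 1)))
  have hq₁le : ∀ ω, q₁ ω ≤ 1 := fun ω => by
    by_cases h : W (n + 2) ω ∈ B' ×ˢ (Set.univ : Set G) <;> simp [hq₁def, h]
  have hq₂le : ∀ ω, q₂ ω ≤ 1 := fun ω => prob_le_one
  have hfin : ∀ (q : Ω → ℝ≥0∞), (∀ ω, q ω ≤ 1) → IsFiniteMeasure (Pr.withDensity q) := by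
    intro q hq
    constructor
    rw [withDensity_apply _ MeasurableSet.univ, Measure.restrict_univ]
    calc ∫⁻ ω, q ω ∂Pr ≤ ∫⁻ _, 1 ∂Pr := lintegral_mono hq
      _ = 1 := by simp
      _ < ⊤ := one_lt_top
  haveI hfin1 : IsFiniteMeasure (Pr.withDensity q₁) := hfin q₁ hq₁le
  haveI hfin2 : IsFiniteMeasure (Pr.withDensity q₂) := hfin q₂ hq₂le
  -- π-system of generators
  set genC : Set (Set Ω) := {t | ∃ F D, MeasurableSet[natF W n] F ∧ MeasurableSet D ∧
    t = F ∩ (fun ω => (W (n + 1) ω).1) ⁻¹' D} with hgenCdef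
  have hpi : IsPiSystem genC := by
    rintro t1 ⟨F1, D1, hF1, hD1, rfl⟩ t2 ⟨F2, D2, hF2, hD2, rfl⟩ -
    exact ⟨F1 ∩ F2, D1 ∩ D2, hF1.inter hF2, hD1.inter hD2, by
      ext ω; simp only [Set.mem_inter_iff, Set.mem_preimage, Set.mem_inter_iff]; tauto⟩
  have hgen : supComapFst W n = MeasurableSpace.generateFrom genC := by
    apply le_antisymm
    · refine sup_le ?_ ?_
      · intro s hs
        exact MeasurableSpace.measurableSet_generateFrom
          ⟨s, Set.univ, hs, MeasurableSet.univ, by simp⟩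
      · rintro s ⟨D, hD, rfl⟩
        exact MeasurableSpace.measurableSet_generateFrom
          ⟨Set.univ, D, MeasurableSet.univ, hD, by simp⟩
    · refine MeasurableSpace.generateFrom_le ?_
      rintro t ⟨F, D, hF, hD, rfl⟩
      exact MeasurableSet.inter ((le_sup_left : natF W n ≤ supComapFst W n) F hF)
        ((le_sup_right : MeasurableSpace.comap (fun ω => (W (n + 1) ω).1) inferInstance ≤ supComapFst W n)
          _ ⟨D, hD, rfl⟩)
  have hmemH : ∀ t ∈ genC, MeasurableSet[supComapFst W n] t := by
    rintro t ⟨F, D, hF, hD, rfl⟩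
    exact MeasurableSet.inter ((le_sup_left : natF W n ≤ supComapFst W n) F hF)
      ((le_sup_right : MeasurableSpace.comap (fun ω => (W (n + 1) ω).1) inferInstance ≤ supComapFst W n)
        _ ⟨D, hD, rfl⟩)
  -- the two trimmed measures agree
  have hνeq : (Pr.withDensity q₁).trim hHle = (Pr.withDensity q₂).trim hHle := by
    refine ext_of_generate_finite genC hgen hpi ?_ ?_
    · rintro t ht
      obtain ⟨F, D, hF, hD, rfl⟩ := ht
      have htH := hmemH _ ⟨F, D, hF, hD, rfl⟩
      rw [trim_measurableSet_eq hHle htH, trim_measurableSet_eq hHle htH,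
        withDensity_apply _ (hHle _ htH), withDensity_apply _ (hHle _ htH)]
      exact key F hF D hD
    · have htH : MeasurableSet[supComapFst W n] (Set.univ : Set Ω) := MeasurableSet.univ
      rw [trim_measurableSet_eq hHle htH, trim_measurableSet_eq hHle htH,
        withDensity_apply _ (hHle _ htH), withDensity_apply _ (hHle _ htH)]
      have := key Set.univ MeasurableSet.univ Set.univ MeasurableSet.univ
      simpa using this
  have hsetint : ∀ t, MeasurableSet[supComapFst W n] t →
      ∫⁻ ω in t, q₁ ω ∂Pr = ∫⁻ ω in t, q₂ ω ∂Pr := by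
    intro t ht
    have h := (@Measure.ext_iff Ω (supComapFst W n) ((Pr.withDensity q₁).trim hHle)
      ((Pr.withDensity q₂).trim hHle)).1 hνeq t ht
    rwa [trim_measurableSet_eq hHle ht, trim_measurableSet_eq hHle ht,
      withDensity_apply _ (hHle _ ht), withDensity_apply _ (hHle _ ht)] at h
  -- real-valued versions
  set f : Ω → ℝ :=
    fun ω => Set.indicator B' (fun _ => (1 : ℝ)) ((W (n + 2) ω).1) with hfdef
  set gr : Ω → ℝ := fun ω => (K (W (n + 1) ω).1 B').toReal with hgrdef
  have hfm : Measurable f :=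
    (measurable_const.indicator hB').comp (measurable_fst.comp (hWm (n + 2)))
  have hfint : Integrable f Pr := by
    refine Integrable.mono' (integrable_const 1) hfm.aestronglyMeasurable
      (Filter.Eventually.of_forall fun ω => ?_)
    by_cases h : (W (n + 2) ω).1 ∈ B' <;> simp [hfdef, h]
  have hgrint : Integrable gr Pr := by
    refine Integrable.mono' (integrable_const 1)
      (((K.measurable_coe hB').comp
        (measurable_fst.comp (hWm (n + 1)))).ennreal_toReal.aestronglyMeasurable)
      (Filter.Eventually.of_forall fun ω => ?_)
    rw [Real.norm_eq_abs, abs_of_nonneg ENNReal.toReal_nonneg]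
    exact ENNReal.toReal_le_of_le_ofReal zero_le_one (by simpa using prob_le_one)
  have hcond : gr =ᵐ[Pr] Pr[f | supComapFst W n] := by
    refine ae_eq_condExp_of_forall_setIntegral_eq hHle hfint
      (fun s _ _ => hgrint.integrableOn) ?_ ?_
    · intro s hs _
      have hsm : MeasurableSet s := hHle _ hs
      have hpre2 : (fun ω => (W (n + 2) ω).1) ⁻¹' B'
          = W (n + 2) ⁻¹' (B' ×ˢ (Set.univ : Set G)) := by ext ω; simp
      have h₁ : ∫ ω in s, f ω ∂Pr = (∫⁻ ω in s, q₁ ω ∂Pr).toReal := by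
        have hfind : f = ((fun ω => (W (n + 2) ω).1) ⁻¹' B').indicator
            (fun _ => (1 : ℝ)) := rfl
        have hq₁ind : q₁ = (W (n + 2) ⁻¹' (B' ×ˢ (Set.univ : Set G))).indicator
            (fun _ => (1 : ℝ≥0∞)) := rfl
        rw [hfind, ← Pi.one_def,
          integral_indicator_one (show MeasurableSet ((fun ω => (W (n + 2) ω).1) ⁻¹' B')
            from (measurable_fst.comp (hWm (n + 2))) hB'),
          hq₁ind, ← Pi.one_def, lintegral_indicator_one (hWm (n + 2)
            (hB'.prod MeasurableSet.univ)), hpre2, Measure.real]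
      have h₂ : ∫ ω in s, gr ω ∂Pr = (∫⁻ ω in s, q₂ ω ∂Pr).toReal := by
        refine integral_toReal (hq₂m.aemeasurable) ?_
        exact Filter.Eventually.of_forall fun ω => lt_of_le_of_lt (hq₂le ω) one_lt_top
      rw [h₁, h₂, hsetint s hs]
    · refine StronglyMeasurable.aestronglyMeasurable ?_
      refine Measurable.stronglyMeasurable ?_
      exact ((K.measurable_coe hB').ennreal_toReal).comp
        (measurable_iff_comap_le.2 (le_sup_right))
  -- tower property down to the natural filtration of V
  have hGH : natF (fun m ω => (W (m + 1) ω).1) n ≤ supComapFst W n := by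
    refine iSup₂_le fun i hi => ?_
    rcases Nat.lt_succ_iff_lt_or_eq.1 (Finset.mem_range.1 hi) with h | rfl
    · have hcc : MeasurableSpace.comap (fun ω => (W (i + 1) ω).1) inferInstance
          ≤ MeasurableSpace.comap (W (i + 1)) inferInstance := by
        rw [show (fun ω => (W (i + 1) ω).1) = Prod.fst ∘ (W (i + 1)) from rfl,
          ← MeasurableSpace.comap_comp]
        exact MeasurableSpace.comap_mono (measurable_iff_comap_le.1 measurable_fst)
      exact le_trans hcc (le_trans (comap_le_natF (Nat.succ_le_of_lt h)) le_sup_left)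
    · exact le_sup_right
  have h𝒢le : natF (fun m ω => (W (m + 1) ω).1) n ≤ mΩ := le_trans hGH hHle
  have hgr𝒢 : Measurable[natF (fun m ω => (W (m + 1) ω).1) n] gr := by
    exact ((K.measurable_coe hB').ennreal_toReal).comp
      (measurable_iff_comap_le.2
        (comap_le_natF (W := fun m ω => (W (m + 1) ω).1) (i := n) (n := n) le_rfl))
  have t1 : Pr[f | natF (fun m ω => (W (m + 1) ω).1) n]
      =ᵐ[Pr] Pr[Pr[f | supComapFst W n] | natF (fun m ω => (W (m + 1) ω).1) n] :=
    (condExp_condExp_of_le hGH hHle).symm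
  have t2 : Pr[Pr[f | supComapFst W n] | natF (fun m ω => (W (m + 1) ω).1) n]
      =ᵐ[Pr] Pr[gr | natF (fun m ω => (W (m + 1) ω).1) n] :=
    condExp_congr_ae hcond.symm
  have t3 : Pr[gr | natF (fun m ω => (W (m + 1) ω).1) n] = gr :=
    condExp_of_stronglyMeasurable h𝒢le hgr𝒢.stronglyMeasurable hgrint
  exact (t1.trans t2).trans (by rw [t3])

open MCAux in
lemma finalBC {G Ω : Type*} [MeasurableSpace G] {mΩ : MeasurableSpace Ω}
    (Pr : Measure Ω) [IsProbabilityMeasure Pr]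
    (Kaug : Kernel (G × G) (G × G)) [IsMarkovKernel Kaug]
    (W : ℕ → Ω → G × G) (hW : IsMarkovChain Pr Kaug W)
    (A : Set (G × G)) (hA : MeasurableSet A)
    (B : Set G) (hB : MeasurableSet B)
    (ε : ℝ≥0∞) (hε0 : 0 < ε) (hεtop : ε ≠ ⊤)
    (hlow : ∀ w : G × G, ε * Kaug w (B ×ˢ (Set.univ : Set G)) ≤ Kaug w A)
    (hVB : ∀ᵐ ω ∂Pr, {n | (W (n + 1) ω).1 ∈ B}.Infinite) :
    ∀ᵐ ω ∂Pr, {n | W n ω ∈ A}.Infinite := by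
  have hWm := hW.1
  set ℱ : Filtration ℕ mΩ := ⟨natF W, natF_mono, natF_le hWm⟩ with hℱdef
  set ℱ' : Filtration ℕ mΩ :=
    ⟨fun n => natF W (n + 1), fun a b h => natF_mono (Nat.add_le_add_right h 1),
      fun n => natF_le hWm (n + 1)⟩ with hℱ'def
  set s : ℕ → Set Ω := fun n => W n ⁻¹' A with hsdef
  set t : ℕ → Set Ω := fun n => W (n + 1) ⁻¹' (B ×ˢ (Set.univ : Set G)) with htdef
  have hs : ∀ n, MeasurableSet[ℱ n] (s n) := fun n =>
    measurableSet_preimage_natF le_rfl hA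
  have ht : ∀ n, MeasurableSet[ℱ' n] (t n) := fun n =>
    measurableSet_preimage_natF le_rfl (hB.prod MeasurableSet.univ)
  have hBC1 := ae_mem_limsup_atTop_iff Pr (ℱ := ℱ) hs
  have hBC2 := ae_mem_limsup_atTop_iff Pr (ℱ := ℱ') ht
  have he1 : ∀ k, (Pr[(s (k + 1)).indicator (1 : Ω → ℝ) | ℱ k])
      =ᵐ[Pr] fun ω => (Kaug (W k ω) A).toReal := by
    intro k
    have heq : (s (k + 1)).indicator (1 : Ω → ℝ)
        = fun ω => Set.indicator A (fun _ => (1 : ℝ)) (W (k + 1) ω) := by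
      ext ω; by_cases h : W (k + 1) ω ∈ A <;>
        simp [hsdef, Set.indicator_apply, h, Set.mem_preimage]
    rw [heq]
    exact hW.2 k A hA
  have he2 : ∀ k, (Pr[(t (k + 1)).indicator (1 : Ω → ℝ) | ℱ' k])
      =ᵐ[Pr] fun ω => (Kaug (W (k + 1) ω) (B ×ˢ (Set.univ : Set G))).toReal := by
    intro k
    have heq : (t (k + 1)).indicator (1 : Ω → ℝ)
        = fun ω => Set.indicator (B ×ˢ (Set.univ : Set G)) (fun _ => (1 : ℝ))
            (W (k + 2) ω) := by
      ext ω; by_cases h : W (k + 2) ω ∈ B ×ˢ (Set.univ : Set G) <;>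
        simp [htdef, Set.indicator_apply, h, Set.mem_preimage]
    rw [heq]
    exact hW.2 (k + 1) (B ×ˢ (Set.univ : Set G)) (hB.prod MeasurableSet.univ)
  have hae1 : ∀ᵐ ω ∂Pr, ∀ k, (Pr[(s (k + 1)).indicator (1 : Ω → ℝ) | ℱ k]) ω
      = (Kaug (W k ω) A).toReal := ae_all_iff.2 he1
  have hae2 : ∀ᵐ ω ∂Pr, ∀ k, (Pr[(t (k + 1)).indicator (1 : Ω → ℝ) | ℱ' k]) ω
      = (Kaug (W (k + 1) ω) (B ×ˢ (Set.univ : Set G))).toReal := ae_all_iff.2 he2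
  filter_upwards [hBC1, hBC2, hae1, hae2, hVB] with ω h1 h2 he1ω he2ω hVω
  have hfreq : ω ∈ limsup t atTop := by
    refine mem_limsup_iff_frequently_mem.2 (Nat.frequently_atTop_iff_infinite.2 ?_)
    have : {n | ω ∈ t n} = {n | (W (n + 1) ω).1 ∈ B} := by
      ext n; simp [htdef, Set.mem_preimage]
    rw [this]; exact hVω
  have hT2 : Tendsto (fun n => ∑ k ∈ Finset.range n,
      (Kaug (W (k + 1) ω) (B ×ˢ (Set.univ : Set G))).toReal) atTop atTop :=
    (h2.1 hfreq).congr fun n => Finset.sum_congr rfl fun k _ => he2ω k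
  have hεR : 0 < ε.toReal := ENNReal.toReal_pos hε0.ne' hεtop
  have hmul : Tendsto (fun n => ε.toReal * ∑ k ∈ Finset.range n,
      (Kaug (W (k + 1) ω) (B ×ˢ (Set.univ : Set G))).toReal) atTop atTop :=
    hT2.const_mul_atTop hεR
  have hcomp : ∀ n, ε.toReal * ∑ k ∈ Finset.range n,
      (Kaug (W (k + 1) ω) (B ×ˢ (Set.univ : Set G))).toReal
      ≤ ∑ k ∈ Finset.range n, (Kaug (W (k + 1) ω) A).toReal := by
    intro n
    rw [Finset.mul_sum]
    refine Finset.sum_le_sum fun k _ => ?_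
    rw [← ENNReal.toReal_mul]
    exact ENNReal.toReal_mono (measure_ne_top _ _) (hlow (W (k + 1) ω))
  have hT3 : Tendsto (fun n => ∑ k ∈ Finset.range n,
      (Kaug (W (k + 1) ω) A).toReal) atTop atTop := tendsto_atTop_mono hcomp hmul
  have hT4 : Tendsto (fun n => ∑ k ∈ Finset.range (n + 1),
      (Kaug (W k ω) A).toReal) atTop atTop := by
    refine tendsto_atTop_mono (fun n => ?_) hT3
    rw [Finset.sum_range_succ']
    exact le_add_of_nonneg_right ENNReal.toReal_nonneg
  have hT5 : Tendsto (fun n => ∑ k ∈ Finset.range n,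
      (Kaug (W k ω) A).toReal) atTop atTop := (tendsto_add_atTop_iff_nat 1).1 hT4
  have hmem : ω ∈ limsup s atTop := by
    refine h1.2 (hT5.congr fun n => Finset.sum_congr rfl fun k _ => (he1ω k).symm)
  exact Nat.frequently_atTop_iff_infinite.1 (mem_limsup_iff_frequently_mem.1 hmem)

/-- If the MH chain is Harris recurrent w.r.t. φ, then the
augmented chain (state, proposal) is Harris recurrent w.r.t. φ_P(dx dy) = P(x,dy)φ(dx). -/
theorem Kaug_harris_recurrent
    {G : Type*} [MeasurableSpace G]
    (μ₀ : Measure G) [SigmaFinite μ₀]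
    (ρ : G → ℝ) (hρm : Measurable ρ) (hρ0 : ∀ x, 0 ≤ ρ x) (hρint : Integrable ρ μ₀)
    (Z : ℝ) (hZ : Z = ∫ x, ρ x ∂μ₀) (hZpos : 0 < Z)
    (μ : Measure G) [SFinite μ]
    (hμ : μ = μ₀.withDensity fun x => ENNReal.ofReal (ρ x / Z))
    (P : Kernel G G) [IsMarkovKernel P]
    (p : G → G → ℝ) (hpm : Measurable (Function.uncurry p)) (hp0 : ∀ x y, 0 ≤ p x y)
    (hP : ∀ x, P x = μ₀.withDensity fun y => ENNReal.ofReal (p x y))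
    (hpos : ∀ x y, 0 < ρ y → 0 < p x y)
    (bar : G → G → ℝ) (hbar : ∀ x y, bar x y = if 0 < ρ y then ρ y / p x y else 0)
    (r : G → G → ℝ)
    (hr : ∀ x y, r x y = if 0 < ρ x * p x y then ρ y * p y x / (ρ x * p x y) else 1)
    (α : G → G → ℝ) (hα : ∀ x y, α x y = min 1 (r x y))
    (K : Kernel G G) [IsMarkovKernel K]
    (hK : ∀ x, K x = (P x).withDensity (fun y => ENNReal.ofReal (α x y)) +
      ENNReal.ofReal (∫ y, (1 - α x y) ∂(P x)) • Measure.dirac x)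
    (Kaug : Kernel (G × G) (G × G)) [IsMarkovKernel Kaug]
    (hKaug : ∀ x y, Kaug (x, y) =
      ENNReal.ofReal (α x y) • ((Measure.dirac y).prod (P y)) +
      ENNReal.ofReal (1 - α x y) • ((Measure.dirac x).prod (P x)))
    (φ : Measure G) [SigmaFinite φ]
    (hHarris : HarrisRecurrent K φ) :
    HarrisRecurrent Kaug (φ.compProd P) := by
  intro Ω mΩ Pr hPr W hW A hA hApos
  haveI := hPr
  have hWm := hW.1
  -- basic facts about α
  have hr0 : ∀ x y, 0 ≤ r x y := by
    intro x y
    rw [hr]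
    split_ifs with h
    · exact div_nonneg (mul_nonneg (hρ0 y) (hp0 y x)) (le_of_lt h)
    · exact zero_le_one
  have hα0 : ∀ x y, 0 ≤ α x y := fun x y => by
    rw [hα]; exact le_min zero_le_one (hr0 x y)
  have hα1 : ∀ x y, α x y ≤ 1 := fun x y => by rw [hα]; exact min_le_left _ _
  have hrm : Measurable (Function.uncurry r) := by
    rw [show Function.uncurry r = fun q : G × G =>
      if 0 < ρ q.1 * p q.1 q.2 then ρ q.2 * p q.2 q.1 / (ρ q.1 * p q.1 q.2) else 1
      from funext fun q => hr q.1 q.2]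
    refine Measurable.ite ?_ ?_ measurable_const
    · exact measurableSet_lt measurable_const ((hρm.comp measurable_fst).mul hpm)
    · exact ((hρm.comp measurable_snd).mul (hpm.comp measurable_swap)).div
        ((hρm.comp measurable_fst).mul hpm)
  have hαm : Measurable (Function.uncurry α) := by
    rw [show Function.uncurry α = fun q : G × G => min 1 (Function.uncurry r q)
      from funext fun q => hα q.1 q.2]
    exact measurable_const.min hrm
  -- section formula for Kaug
  have hKaugsec : ∀ (x y : G) (T : Set (G × G)), MeasurableSet T →
      Kaug (x, y) T = ENNReal.ofReal (α x y) * P y (Prod.mk y ⁻¹' T)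
        + ENNReal.ofReal (1 - α x y) * P x (Prod.mk x ⁻¹' T) := by
    intro x y T hT
    rw [hKaug x y, Measure.add_apply, Measure.smul_apply, Measure.smul_apply,
      MCAux.dirac_prod_apply y hT, MCAux.dirac_prod_apply x hT, smul_eq_mul, smul_eq_mul]
  have hmkpre : ∀ (ν : Measure G), IsProbabilityMeasure ν → ∀ (u : G) (B' : Set G),
      ν (Prod.mk u ⁻¹' (B' ×ˢ (Set.univ : Set G))) = B'.indicator (fun _ => (1:ℝ≥0∞)) u := by
    intro ν hν u B'
    by_cases h : u ∈ B'
    · have : Prod.mk u ⁻¹' (B' ×ˢ (Set.univ : Set G)) = Set.univ := by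
        ext v; simp [h]
      rw [this, measure_univ, Set.indicator_of_mem h]
    · have : Prod.mk u ⁻¹' (B' ×ˢ (Set.univ : Set G)) = ∅ := by
        ext v; simp [h]
      rw [this, measure_empty, Set.indicator_of_notMem h]
  -- marginal identity
  have hmarg : ∀ (B' : Set G), MeasurableSet B' → ∀ u,
      ∫⁻ v, Kaug (u, v) (B' ×ˢ (Set.univ : Set G)) ∂(P u) = K u B' := by
    intro B' hB' u
    have hsec : ∀ v, Kaug (u, v) (B' ×ˢ (Set.univ : Set G))
        = ENNReal.ofReal (α u v) * B'.indicator (fun _ => (1:ℝ≥0∞)) v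
          + ENNReal.ofReal (1 - α u v) * B'.indicator (fun _ => (1:ℝ≥0∞)) u := by
      intro v
      rw [hKaugsec u v _ (hB'.prod MeasurableSet.univ), hmkpre _ inferInstance,
        hmkpre _ inferInstance]
    have hαum : Measurable (fun v => α u v) :=
      hαm.comp (measurable_const.prodMk measurable_id)
    have hm1 : Measurable (fun v => ENNReal.ofReal (α u v)
        * B'.indicator (fun _ => (1:ℝ≥0∞)) v) :=
      hαum.ennreal_ofReal.mul (measurable_one.indicator hB')
    calc ∫⁻ v, Kaug (u, v) (B' ×ˢ (Set.univ : Set G)) ∂(P u)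
        = ∫⁻ v, (ENNReal.ofReal (α u v) * B'.indicator (fun _ => (1:ℝ≥0∞)) v
            + ENNReal.ofReal (1 - α u v) * B'.indicator (fun _ => (1:ℝ≥0∞)) u) ∂(P u) :=
          lintegral_congr hsec
      _ = (∫⁻ v, ENNReal.ofReal (α u v) * B'.indicator (fun _ => (1:ℝ≥0∞)) v ∂(P u))
            + (∫⁻ v, ENNReal.ofReal (1 - α u v) ∂(P u))
              * B'.indicator (fun _ => (1:ℝ≥0∞)) u := by
          rw [lintegral_add_left hm1, lintegral_mul_const _
            ((show Measurable (fun v => 1 - α u v) from measurable_const.sub hαum).ennreal_ofReal)]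
      _ = (P u).withDensity (fun v => ENNReal.ofReal (α u v)) B'
            + ENNReal.ofReal (∫ v, (1 - α u v) ∂(P u))
              * B'.indicator (fun _ => (1:ℝ≥0∞)) u := by
          congr 1
          · have : (fun v => ENNReal.ofReal (α u v) * B'.indicator (fun _ => (1:ℝ≥0∞)) v)
                = B'.indicator (fun v => ENNReal.ofReal (α u v)) := by
              ext v; by_cases h : v ∈ B' <;> simp [h]
            rw [this, lintegral_indicator hB', withDensity_apply _ hB']
          · congr 1
            rw [← ofReal_integral_eq_lintegral_ofReal]
            · refine Integrable.mono' (integrable_const 1)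
                ((measurable_const.sub hαum).aestronglyMeasurable)
                (Filter.Eventually.of_forall fun v => ?_)
              rw [Real.norm_eq_abs, abs_of_nonneg (by linarith [hα1 u v])]
              linarith [hα0 u v]
            · exact Filter.Eventually.of_forall fun v => by
                simp only [Pi.zero_apply]; linarith [hα1 u v]
      _ = K u B' := by
          rw [hK u, Measure.add_apply, Measure.smul_apply, smul_eq_mul,
            Measure.dirac_apply' u hB']
          rfl
  -- choice of ε and B
  have hg : Measurable (fun x => P x (Prod.mk x ⁻¹' A)) :=
    Kernel.measurable_kernel_prodMk_left hA
  obtain ⟨ε, hε0, hεtop, hB, hφB⟩ :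
      ∃ ε : ℝ≥0∞, 0 < ε ∧ ε ≠ ⊤ ∧
        MeasurableSet {x | ε < P x (Prod.mk x ⁻¹' A)} ∧
        0 < φ {x | ε < P x (Prod.mk x ⁻¹' A)} := by
    have hcompA : (φ.compProd P) A = ∫⁻ x, P x (Prod.mk x ⁻¹' A) ∂φ :=
      Measure.compProd_apply hA
    have hne : φ {x | P x (Prod.mk x ⁻¹' A) ≠ 0} ≠ 0 := by
      intro h0
      have : (fun x => P x (Prod.mk x ⁻¹' A)) =ᵐ[φ] 0 := by
        rw [Filter.EventuallyEq, ae_iff]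
        simpa using h0
      rw [hcompA, lintegral_congr_ae this] at hApos
      simp at hApos
    have hsub : {x | P x (Prod.mk x ⁻¹' A) ≠ 0}
        ⊆ ⋃ n : ℕ, {x | ((n : ℝ≥0∞))⁻¹ < P x (Prod.mk x ⁻¹' A)} := by
      intro x hx
      obtain ⟨n, hn⟩ := ENNReal.exists_inv_nat_lt hx
      exact Set.mem_iUnion.2 ⟨n, hn⟩
    have : ∃ n : ℕ, φ {x | ((n : ℝ≥0∞))⁻¹ < P x (Prod.mk x ⁻¹' A)} ≠ 0 := by
      by_contra hall
      push_neg at hall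
      exact hne (measure_mono_null hsub (by
        rw [measure_iUnion_null_iff]; exact fun n => hall n))
    obtain ⟨n, hn⟩ := this
    have hn0 : n ≠ 0 := by
      intro h0
      subst h0
      apply hn
      have : {x | ((0:ℕ) : ℝ≥0∞)⁻¹ < P x (Prod.mk x ⁻¹' A)} = ∅ := by
        ext x
        simp only [Set.mem_setOf_eq, Set.mem_empty_iff_false, iff_false, not_lt]
        exact le_trans prob_le_one (by simp)
      rw [this, measure_empty]
    exact ⟨(n : ℝ≥0∞)⁻¹, by simp, by simp [hn0],
      measurableSet_lt measurable_const hg, pos_iff_ne_zero.2 hn⟩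
  -- the shifted first-coordinate chain is a K-chain, hence Harris
  have hVchain : IsMarkovChain Pr K (fun n ω => (W (n + 1) ω).1) :=
    Vchain Pr P K Kaug α hKaug hmarg W hW
  have hVB : ∀ᵐ ω ∂Pr, {n | (W (n + 1) ω).1 ∈ {x | ε < P x (Prod.mk x ⁻¹' A)}}.Infinite :=
    hHarris Ω mΩ Pr hPr (fun n ω => (W (n + 1) ω).1) hVchain _ hB hφB
  -- lower bound for Kaug on A
  have hlow : ∀ w : G × G,
      ε * Kaug w ({x | ε < P x (Prod.mk x ⁻¹' A)} ×ˢ (Set.univ : Set G)) ≤ Kaug w A := by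
    rintro ⟨x, y⟩
    have hind : ∀ u : G, ε * Set.indicator {x | ε < P x (Prod.mk x ⁻¹' A)}
        (fun _ => (1:ℝ≥0∞)) u ≤ P u (Prod.mk u ⁻¹' A) := by
      intro u
      by_cases hu : u ∈ {x | ε < P x (Prod.mk x ⁻¹' A)}
      · rw [Set.indicator_of_mem hu, mul_one]
        exact le_of_lt hu
      · rw [Set.indicator_of_notMem hu, mul_zero]
        exact zero_le
    rw [hKaugsec x y _ (hB.prod MeasurableSet.univ), hKaugsec x y A hA,
      hmkpre _ inferInstance, hmkpre _ inferInstance]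
    calc ε * (ENNReal.ofReal (α x y)
          * Set.indicator {x | ε < P x (Prod.mk x ⁻¹' A)} (fun _ => (1:ℝ≥0∞)) y
        + ENNReal.ofReal (1 - α x y)
          * Set.indicator {x | ε < P x (Prod.mk x ⁻¹' A)} (fun _ => (1:ℝ≥0∞)) x)
        = ENNReal.ofReal (α x y) * (ε
            * Set.indicator {x | ε < P x (Prod.mk x ⁻¹' A)} (fun _ => (1:ℝ≥0∞)) y)
          + ENNReal.ofReal (1 - α x y) * (ε
            * Set.indicator {x | ε < P x (Prod.mk x ⁻¹' A)} (fun _ => (1:ℝ≥0∞)) x) := by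
          ring
      _ ≤ ENNReal.ofReal (α x y) * P y (Prod.mk y ⁻¹' A)
          + ENNReal.ofReal (1 - α x y) * P x (Prod.mk x ⁻¹' A) :=
          add_le_add (mul_le_mul_right (hind y) _) (mul_le_mul_right (hind x) _)
  exact finalBC Pr Kaug W hW A hA _ hB ε hε0 hεtop hlow hVB
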